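/- Let $d \geq 2$ be an integer, $f : S \to S$ a bijection of a set $S$, and $h : S \to \mathbb{R}$ a function. Suppose there exists $C' > 0$ such that for all $z \in S$, $\frac{1}{d}h(f(z)) + \frac{1}{d}h(f^{-1}(z)) - (1+\frac{1}{d^2})h(z) \geq -C'$. Suppose moreover that for every $z$, the limits $\widehat{h}^+(z) := \lim_{n\to\infty} d^{-n} h(f^n(z))$ and $\widehat{h}^-(z) := \lim_{n\to\infty} d^{-n} h(f^{-n}(z))$ exist. Then $\widehat{h}^+(z) + \widehat{h}^-(z) \geq h(z) - \frac{d^2}{(d-1)^2} C'$ for all $z \in S$. -/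

import Mathlib

open Filter Finset

private lemma aux_seq (D : ℝ) (hD : 2 ≤ D) (s : ℕ → ℝ)
    (hrec : ∀ n, s (n+2) + s n ≥ (D + 1/D) * s (n+1))
    (L : ℝ) (hL : Tendsto (fun n => s n / D^n) atTop (nhds L)) :
    L ≥ s 0 + (s 1 - D * s 0) * (D / (D^2 - 1)) := by
  have hD0 : (0:ℝ) < D := by linarith
  have hne : D ≠ 0 := hD0.ne'
  have hD2 : (0:ℝ) < D^2 - 1 := by nlinarith
  set v0 := s 1 - D * s 0 with hv0
  have hv : ∀ n, s (n+1) - D * s n ≥ v0 / D^n := by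
    intro n
    induction n with
    | zero => simp [hv0]
    | succ n ih =>
      have h1 := hrec n
      have hpow : (0:ℝ) < D ^ n := by positivity
      have h1' : (D^2 + 1) * s (n+1) ≤ D * (s (n+2) + s n) := by
        have h0 := mul_le_mul_of_nonneg_left h1 hD0.le
        have hm : D * (D + 1/D) = D^2 + 1 := by field_simp
        calc (D^2+1) * s (n+1) = D * (D + 1/D) * s (n+1) := by rw [hm]
          _ = D * ((D + 1/D) * s (n+1)) := by ring
          _ ≤ _ := h0
      have h2 : s (n+2) - D * s (n+1) ≥ (s (n+1) - D * s n) / D := by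
        rw [ge_iff_le, div_le_iff₀ hD0]
        nlinarith [h1']
      have h3 : (s (n+1) - D * s n) / D ≥ (v0 / D^n) / D := by gcongr
      calc s (n+2) - D * s (n+1) ≥ (s (n+1) - D * s n) / D := h2
        _ ≥ (v0 / D^n) / D := h3
        _ = v0 / D^(n+1) := by rw [div_div, pow_succ]
  have hP : ∀ n, s n / D^n ≥ s 0 + v0 * ∑ j ∈ range n, (1/D)^(2*j+1) := by
    intro n
    induction n with
    | zero => simp
    | succ n ih =>
      have hvn := hv n
      have hpow : (0:ℝ) < D ^ (n+1) := by positivity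
      have hpown : (0:ℝ) < D ^ n := by positivity
      have e1 : s (n+1) / D^(n+1) = s n / D^n + (s (n+1) - D * s n) / D^(n+1) := by
        field_simp
        ring
      have e2 : (s (n+1) - D * s n) / D^(n+1) ≥ v0 * (1/D)^(2*n+1) := by
        have h4 : (v0 / D^n) / D^(n+1) ≤ (s (n+1) - D * s n) / D^(n+1) := by gcongr
        refine le_trans (le_of_eq ?_) h4
        rw [div_div, div_pow, one_pow, mul_one_div]
        congr 1
        rw [← pow_add]
        ring_nf
      rw [sum_range_succ, e1]
      nlinarith [ih, e2]
  have hr : |1/D^2| < 1 := by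
    rw [abs_of_pos (by positivity), div_lt_one (by positivity)]
    nlinarith
  have hs := (hasSum_geometric_of_abs_lt_one hr).tendsto_sum_nat
  have hs2 : Tendsto (fun n : ℕ => ∑ j ∈ range n, (1/D)^(2*j+1)) atTop
      (nhds (D / (D^2 - 1))) := by
    have h2 := hs.const_mul (1/D)
    have heq : (1/D) * (1 - 1/D^2)⁻¹ = D / (D^2 - 1) := by
      rw [inv_eq_one_div]
      field_simp
    rw [heq] at h2
    refine h2.congr fun n => ?_
    rw [mul_sum]
    refine sum_congr rfl fun j _ => ?_
    have e3 : (1/D)^(2*j+1) = (1/D) * ((1/D)^2)^j := by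
      rw [pow_add, pow_mul, pow_one]; ring
    rw [e3]
    ring
  have hgeom : Tendsto (fun n : ℕ => s 0 + v0 * ∑ j ∈ range n, (1/D)^(2*j+1)) atTop
      (nhds (s 0 + v0 * (D / (D^2 - 1)))) := ((hs2.const_mul v0).const_add (s 0))
  exact le_of_tendsto_of_tendsto' hgeom hL fun n => hP n

theorem stmt_1 {S : Type*} (d : ℕ) (hd : 2 ≤ d) (f : Equiv S S) (h : S → ℝ)
    (C' : ℝ) (hC' : 0 < C')
    (H : ∀ z : S, (1 / (d : ℝ)) * h (f z) + (1 / (d : ℝ)) * h (f.symm z) -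
      (1 + 1 / (d : ℝ) ^ 2) * h z ≥ -C')
    (hplus hminus : S → ℝ)
    (hlimp : ∀ z : S, Tendsto (fun n : ℕ => h ((f : S → S)^[n] z) / (d : ℝ) ^ n)
      atTop (nhds (hplus z)))
    (hlimm : ∀ z : S, Tendsto (fun n : ℕ => h ((f.symm : S → S)^[n] z) / (d : ℝ) ^ n)
      atTop (nhds (hminus z))) :
    ∀ z : S, hplus z + hminus z ≥ h z - (d : ℝ) ^ 2 / ((d : ℝ) - 1) ^ 2 * C' := by
  intro z
  set D : ℝ := (d : ℝ) with hDdef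
  have hD : (2:ℝ) ≤ D := by rw [hDdef]; exact_mod_cast hd
  have hD0 : (0:ℝ) < D := by linarith
  have hne : D ≠ 0 := hD0.ne'
  have hne1 : D - 1 ≠ 0 := by intro hc; nlinarith
  set K : ℝ := D ^ 2 / (D - 1) ^ 2 * C' with hK
  set h' : S → ℝ := fun w => h w - K with hh'
  -- key functional inequality for h'
  have key : ∀ w : S, h' (f w) + h' (f.symm w) ≥ (D + 1/D) * h' w := by
    intro w
    have A := H w
    have B := mul_le_mul_of_nonneg_left A hD0.le
    have eL : D * ((1 / D) * h (f w) + (1 / D) * h (f.symm w) - (1 + 1 / D ^ 2) * h w)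
        = h (f w) + h (f.symm w) - D * h w - (1/D) * h w := by
      field_simp
      ring
    rw [eL] at B
    have eK : (D + 1/D) * K - 2 * K = D * C' := by
      rw [hK]
      field_simp
      ring
    simp only [hh']
    nlinarith [B, eK]
  -- the sequence
  set s : ℕ → ℝ := fun n => h' ((f : S → S)^[n] z) + h' ((f.symm : S → S)^[n] z) with hs
  have hrec : ∀ n, s (n+2) + s n ≥ (D + 1/D) * s (n+1) := by
    intro n
    have k1 := key ((f : S → S)^[n+1] z)
    have k2 := key ((f.symm : S → S)^[n+1] z)
    have e1 : f ((f : S → S)^[n+1] z) = (f : S → S)^[n+2] z :=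
      (Function.iterate_succ_apply' (f : S → S) (n+1) z).symm
    have e2 : f.symm ((f : S → S)^[n+1] z) = (f : S → S)^[n] z := by
      rw [Function.iterate_succ_apply' (f : S → S) n z]
      exact f.symm_apply_apply _
    have e3 : f ((f.symm : S → S)^[n+1] z) = (f.symm : S → S)^[n] z := by
      rw [Function.iterate_succ_apply' (f.symm : S → S) n z]
      exact f.apply_symm_apply _
    have e4 : f.symm ((f.symm : S → S)^[n+1] z) = (f.symm : S → S)^[n+2] z :=
      (Function.iterate_succ_apply' (f.symm : S → S) (n+1) z).symm
    rw [e1, e2] at k1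
    rw [e3, e4] at k2
    simp only [hs]
    linarith [k1, k2]
  -- the limit
  have hlim : Tendsto (fun n => s n / D^n) atTop (nhds (hplus z + hminus z)) := by
    have h0 : Tendsto (fun n : ℕ => (2*K) * (1/D)^n) atTop (nhds 0) := by
      have : Tendsto (fun n : ℕ => (1/D)^n) atTop (nhds 0) := by
        apply tendsto_pow_atTop_nhds_zero_of_lt_one (by positivity)
        rw [div_lt_one hD0]; linarith
      simpa using this.const_mul (2*K)
    have hsum := ((hlimp z).add (hlimm z)).sub h0
    rw [sub_zero] at hsum
    refine hsum.congr fun n => ?_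
    simp only [hs, hh']
    have : (0:ℝ) < D ^ n := by positivity
    field_simp
    have hx : D ^ n * D⁻¹ ^ n = 1 := by rw [inv_pow, mul_inv_cancel₀ this.ne']
    linear_combination (-(K*2)) * hx
  have main := aux_seq D hD s hrec (hplus z + hminus z) hlim
  -- s 0 and s 1
  have hs0 : s 0 = 2 * h' z := by simp [hs]; ring
  have hs1 : s 1 ≥ (D + 1/D) * h' z := by
    have := key z
    simpa [hs] using this
  have hT0 : (0:ℝ) < D / (D^2 - 1) := by
    apply div_pos hD0; nlinarith
  have hident : ((D + 1/D) - 2*D) * (D / (D^2 - 1)) = -1 := by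
    have : D^2 - 1 ≠ 0 := by nlinarith
    field_simp
    ring
  have final : hplus z + hminus z ≥ h' z := by
    clear_value s h' K D
    rw [hs0] at main
    have hmul := mul_le_mul_of_nonneg_right hs1 hT0.le
    have hid3 : (D + 1/D) * h' z * (D / (D^2 - 1)) - 2*D * h' z * (D / (D^2 - 1)) = -h' z := by
      linear_combination (h' z) * hident
    have hexp : (s 1 - D * (2 * h' z)) * (D / (D^2 - 1))
        = s 1 * (D / (D^2 - 1)) - 2*D * h' z * (D / (D^2 - 1)) := by ring
    rw [hexp] at main
    linarith [main, hmul, hid3]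
  simpa [hh', hK, hDdef] using final
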